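/- For every f ∈ ℱ₁ and every ε > 0 there exists a polynomial p ∈ 𝒫′ with sup_{x∈[0,1]} |p(x) − f(x)| < ε; consequently the closure of 𝒫′_G in C([0,1]) with respect to the supremum norm equals ℱ₁. -/

import Mathlib

open Polynomial

/-- 𝒫′: real polynomials with p((0,1)) ⊆ (0,1), p < 0 on (-∞,0), p > 1 on (1,∞). -/
def memP' (p : Polynomial ℝ) : Prop :=
  (∀ x ∈ Set.Ioo (0:ℝ) 1, p.eval x ∈ Set.Ioo (0:ℝ) 1) ∧
  (∀ x : ℝ, x < 0 → p.eval x < 0) ∧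
  (∀ x : ℝ, 1 < x → 1 < p.eval x)

/-- 𝒫′_G: restrictions to [0,1] of polynomials in 𝒫′, as continuous maps. -/
def P'G : Set C(Set.Icc (0:ℝ) 1, ℝ) :=
  {g | ∃ p : Polynomial ℝ, memP' p ∧ g = p.toContinuousMapOn (Set.Icc (0:ℝ) 1)}

/-- ℱ₁ : continuous f : [0,1] → ℝ with f(0)=0, f(1)=1, 0 ≤ f ≤ 1. -/
def F1 : Set C(Set.Icc (0:ℝ) 1, ℝ) :=
  {f | f ⟨0, by norm_num⟩ = 0 ∧ f ⟨1, by norm_num⟩ = 1 ∧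
       ∀ x, f x ∈ Set.Icc (0:ℝ) 1}

set_option maxHeartbeats 1000000

open Finset unitInterval

lemma coeff_one_ge (r : ℝ[X]) (η : ℝ) (h0 : r.eval 0 = 0)
    (h : ∀ x ∈ Set.Ioo (0:ℝ) 1, η * x ≤ r.eval x) : η ≤ r.coeff 1 := by
  have hc0 : r.coeff 0 = 0 := by rw [Polynomial.coeff_zero_eq_eval_zero]; exact h0
  set t := r.divX with ht
  have hrt : ∀ x : ℝ, r.eval x = t.eval x * x := by
    intro x
    conv_lhs => rw [← r.divX_mul_X_add, Polynomial.eval_add, Polynomial.eval_mul,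
      Polynomial.eval_X, hc0, Polynomial.eval_C]
    simp
    exact Or.inl rfl
  have hco : r.coeff 1 = t.eval 0 := by
    rw [← Polynomial.coeff_zero_eq_eval_zero, ht, Polynomial.coeff_divX]
  rw [hco]
  have htend : Filter.Tendsto (fun x => t.eval x) (nhdsWithin 0 (Set.Ioo (0:ℝ) 1)) (nhds (t.eval 0)) :=
    (t.continuous_aeval.tendsto 0).mono_left nhdsWithin_le_nhds
  have hne : (nhdsWithin (0:ℝ) (Set.Ioo (0:ℝ) 1)).NeBot := by
    rw [← mem_closure_iff_nhdsWithin_neBot, closure_Ioo (by norm_num : (0:ℝ) ≠ 1)]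
    exact ⟨le_refl 0, by norm_num⟩
  refine ge_of_tendsto htend ?_
  filter_upwards [self_mem_nhdsWithin] with x hx
  have := h x hx
  rw [hrt x] at this
  exact le_of_mul_le_mul_right (by linarith [this]) hx.1

lemma poly_bound1 (s : ℝ[X]) (h0 : s.coeff 0 = 0) (x : ℝ) :
    |s.eval x| ≤ (∑ i ∈ range (s.natDegree + 1), |s.coeff i|) * (|x| * (max 1 |x|) ^ s.natDegree) := by
  have hM1 : (1:ℝ) ≤ max 1 |x| := le_max_left _ _
  have hM0 : (0:ℝ) ≤ max 1 |x| := by linarith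
  rw [s.eval_eq_sum_range]
  calc |∑ i ∈ range (s.natDegree + 1), s.coeff i * x ^ i|
      ≤ ∑ i ∈ range (s.natDegree + 1), |s.coeff i * x ^ i| := abs_sum_le_sum_abs _ _
    _ ≤ ∑ i ∈ range (s.natDegree + 1), |s.coeff i| * (|x| * (max 1 |x|) ^ s.natDegree) := by
        apply Finset.sum_le_sum
        intro i hi
        rw [abs_mul]
        rcases Nat.eq_zero_or_pos i with h | h
        · simp [h, h0]
        · apply mul_le_mul_of_nonneg_left _ (abs_nonneg _)
          rw [abs_pow]
          calc |x| ^ i = |x| * |x| ^ (i - 1) := by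
                rw [← pow_succ']
                congr 1
                omega
            _ ≤ |x| * (max 1 |x|) ^ (i-1) := by
                apply mul_le_mul_of_nonneg_left _ (abs_nonneg _)
                exact pow_le_pow_left₀ (abs_nonneg _) (le_max_right _ _) _
            _ ≤ |x| * (max 1 |x|) ^ s.natDegree := by
                apply mul_le_mul_of_nonneg_left _ (abs_nonneg _)
                apply pow_le_pow_right₀ hM1
                have := Finset.mem_range.mp hi
                omega
    _ = (∑ i ∈ range (s.natDegree + 1), |s.coeff i|) * (|x| * (max 1 |x|) ^ s.natDegree) := by
        rw [Finset.sum_mul]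

lemma poly_bound2 (s : ℝ[X]) (h0 : s.coeff 0 = 0) (h1 : s.coeff 1 = 0) (x : ℝ) (hx : |x| ≤ 1) :
    |s.eval x| ≤ (∑ i ∈ range (s.natDegree + 1), |s.coeff i|) * x ^ 2 := by
  rw [s.eval_eq_sum_range]
  calc |∑ i ∈ range (s.natDegree + 1), s.coeff i * x ^ i|
      ≤ ∑ i ∈ range (s.natDegree + 1), |s.coeff i * x ^ i| := abs_sum_le_sum_abs _ _
    _ ≤ ∑ i ∈ range (s.natDegree + 1), |s.coeff i| * x ^ 2 := by
        apply Finset.sum_le_sum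
        intro i _
        rw [abs_mul]
        match i, h0, h1 with
        | 0, h0, _ => simp [h0]
        | 1, _, h1 => simp [h1]
        | (n+2), _, _ =>
          apply mul_le_mul_of_nonneg_left _ (abs_nonneg _)
          rw [abs_pow, ← sq_abs]
          exact pow_le_pow_of_le_one (abs_nonneg _) hx (by omega)
    _ = _ := by rw [Finset.sum_mul]

lemma tail_lemma (r : ℝ[X]) (η : ℝ) (hη : 0 < η) (h0 : r.eval 0 = 0)
    (hlow : ∀ x ∈ Set.Ioo (0:ℝ) 1, η * x ≤ r.eval x) :
    ∃ m₀ : ℕ, ∀ m : ℕ, m₀ ≤ m → ∀ x : ℝ, x < 0 →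
      r.eval x + η * (x * (x - 1) * (2 * x - 1) ^ (2 * m + 1)) < 0 := by
  have ha1 : η ≤ r.coeff 1 := coeff_one_ge r η h0 hlow
  have hc0 : r.coeff 0 = 0 := by rw [Polynomial.coeff_zero_eq_eval_zero]; exact h0
  set s : ℝ[X] := r - Polynomial.C (r.coeff 1) * Polynomial.X with hs
  have hs0 : s.coeff 0 = 0 := by simp [hs, hc0]
  have hs1 : s.coeff 1 = 0 := by simp [hs]
  have hsev : ∀ x : ℝ, s.eval x = r.eval x - r.coeff 1 * x := by intro x; simp [hs]
  set Ks : ℝ := ∑ i ∈ range (s.natDegree + 1), |s.coeff i| with hKs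
  have hKs0 : 0 ≤ Ks := Finset.sum_nonneg fun i _ => abs_nonneg _
  set K : ℝ := ∑ i ∈ range (r.natDegree + 1), |r.coeff i| with hK
  have hK0 : 0 ≤ K := Finset.sum_nonneg fun i _ => abs_nonneg _
  set δ : ℝ := min 1 (η / (2 * (Ks + 1))) with hδdef
  have hδ0 : 0 < δ := lt_min one_pos (by positivity)
  have hδ1 : δ ≤ 1 := min_le_left _ _
  have hKsδ : Ks * δ ≤ η / 2 := by
    calc Ks * δ ≤ Ks * (η / (2 * (Ks + 1))) :=
          mul_le_mul_of_nonneg_left (min_le_right _ _) hKs0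
      _ ≤ η / 2 := by
          rw [show Ks * (η / (2 * (Ks + 1))) = Ks * η / (2 * (Ks + 1)) from by ring,
            div_le_div_iff₀ (by positivity) (by norm_num : (0:ℝ) < 2)]
          nlinarith
  obtain ⟨j₀, hj₀⟩ : ∃ j₀ : ℕ, (K + 1) / η < (1 + 2 * δ) ^ j₀ :=
    pow_unbounded_of_one_lt _ (by linarith)
  refine ⟨r.natDegree + j₀, fun m hm x hx => ?_⟩
  have hodd : Odd (2 * m + 1) := ⟨m, by ring⟩
  rcases lt_or_ge (-δ) x with hxδ | hxδ
  · -- near zero: -δ < x < 0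
    have hT : x * (x - 1) * (2 * x - 1) ^ (2 * m + 1) < 0 := by
      apply mul_neg_of_pos_of_neg
      · nlinarith
      · exact hodd.pow_neg (by linarith)
    have hb2 := poly_bound2 s hs0 hs1 x (by rw [abs_of_neg hx]; linarith)
    have hx2 : x ^ 2 ≤ δ * (-x) := by nlinarith
    have hsb : s.eval x ≤ η / 2 * (-x) := by
      have h1 : s.eval x ≤ Ks * x ^ 2 := (le_abs_self _).trans hb2
      calc s.eval x ≤ Ks * (δ * (-x)) := h1.trans (mul_le_mul_of_nonneg_left hx2 hKs0)
        _ = (Ks * δ) * (-x) := by ring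
        _ ≤ η / 2 * (-x) := mul_le_mul_of_nonneg_right hKsδ (by linarith)
    have hr : r.eval x ≤ η / 2 * x := by
      have := hsev x
      have ha1x : r.coeff 1 * x ≤ η * x := by
        apply mul_le_mul_of_nonpos_right ha1 (le_of_lt hx)
      nlinarith
    nlinarith
  · -- far: x ≤ -δ
    set A : ℝ := -x with hA
    have hA0 : 0 < A := by simp [hA]; linarith
    have hAδ : δ ≤ A := by simp [hA]; linarith
    set M : ℝ := max 1 (-x) with hM
    have hM1 : (1:ℝ) ≤ M := le_max_left _ _
    have hM0 : (0:ℝ) ≤ M := by linarith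
    have hMb : M ≤ 1 - 2 * x := max_le (by linarith) (by linarith)
    set N : ℕ := r.natDegree with hN
    have hrb : |r.eval x| ≤ K * (A * M ^ N) := by
      have h := poly_bound1 r hc0 x
      rw [abs_of_neg hx] at h
      exact h
    -- bound on T
    have hTsplit : (2 * x - 1) ^ (2 * m + 1) = -((1 - 2*x) ^ (2 * m + 1)) := by
      rw [show (2*x - 1) = -(1 - 2*x) by ring, hodd.neg_pow]
    have hble : (K + 1) / η * M ^ N ≤ (1 - 2*x) ^ (2 * m + 1) := by
      have h2m : N + (2 * m + 1 - N) = 2 * m + 1 := by omega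
      have hj : j₀ ≤ 2 * m + 1 - N := by omega
      have hb1 : (1 + 2*δ : ℝ) ≤ 1 - 2*x := by linarith
      calc (K + 1) / η * M ^ N ≤ (1 + 2*δ) ^ j₀ * M ^ N := by
            apply mul_le_mul_of_nonneg_right (le_of_lt hj₀) (by positivity)
        _ ≤ (1 + 2*δ) ^ (2 * m + 1 - N) * M ^ N := by
            apply mul_le_mul_of_nonneg_right _ (by positivity)
            exact pow_le_pow_right₀ (by linarith) hj
        _ ≤ (1 - 2*x) ^ (2 * m + 1 - N) * (1 - 2*x) ^ N := by
            apply mul_le_mul (pow_le_pow_left₀ (by linarith) hb1 _)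
              (pow_le_pow_left₀ hM0 hMb _) (pow_nonneg hM0 N)
              (pow_nonneg (by linarith) _)
        _ = (1 - 2*x) ^ (2 * m + 1) := by rw [← pow_add]; congr 1; omega
    have hxx : A ≤ x * (x - 1) := by nlinarith
    have hTle : η * (x * (x - 1) * (2 * x - 1) ^ (2 * m + 1)) ≤ -((K+1) * (A * M ^ N)) := by
      rw [hTsplit]
      have hp0 : (0:ℝ) < (1 - 2*x) ^ (2*m+1) := pow_pos (by linarith) _
      have step1 : (K + 1) * (A * M ^ N) ≤ η * (x * (x-1) * (1 - 2*x) ^ (2*m+1)) := by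
        have h1 : (K + 1) / η * M ^ N * A ≤ (1 - 2*x) ^ (2 * m + 1) * (x * (x-1)) := by
          apply mul_le_mul hble hxx (by linarith) (pow_nonneg (by linarith) _)
        have := mul_le_mul_of_nonneg_left h1 (le_of_lt hη)
        calc (K + 1) * (A * M ^ N) = η * ((K + 1) / η * M ^ N * A) := by
              field_simp
          _ ≤ η * ((1 - 2*x) ^ (2 * m + 1) * (x * (x-1))) := this
          _ = η * (x * (x-1) * (1 - 2*x) ^ (2*m+1)) := by ring
      linarith [step1]
    have hfinal : r.eval x ≤ K * (A * M ^ N) := (le_abs_self _).trans hrb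
    have hpos : (0:ℝ) < A * M ^ N := mul_pos hA0 (pow_pos (by linarith) N)
    have hsum : K * (A * M ^ N) - (K + 1) * (A * M ^ N) = -(A * M ^ N) := by ring
    linarith

lemma interior_lemma (r : ℝ[X]) (η : ℝ) (hη : 0 < η) (m : ℕ)
    (hlow : ∀ x ∈ Set.Ioo (0:ℝ) 1, η * x ≤ r.eval x) :
    ∀ x ∈ Set.Ioo (0:ℝ) 1, 0 < r.eval x + η * (x * (x - 1) * (2 * x - 1) ^ (2 * m + 1)) := by
  intro x hx
  obtain ⟨hx0, hx1⟩ := hx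
  have h1 : |(2*x-1) ^ (2*m+1)| ≤ 1 := by
    rw [abs_pow]
    apply pow_le_one₀ (abs_nonneg _)
    rw [abs_le]; constructor <;> linarith
  have h2 : |x * (x - 1) * (2*x-1) ^ (2*m+1)| ≤ x * (1 - x) := by
    rw [abs_mul]
    have : |x * (x-1)| = x * (1-x) := by
      rw [abs_mul, abs_of_pos hx0, abs_of_neg (by linarith : x - 1 < 0)]; ring
    rw [this]
    calc x * (1-x) * |(2*x-1) ^ (2*m+1)| ≤ x * (1-x) * 1 :=
          mul_le_mul_of_nonneg_left h1 (by nlinarith)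
      _ = x * (1-x) := mul_one _
  have h3 := hlow x ⟨hx0, hx1⟩
  have h4 : -(x * (1-x)) ≤ x * (x - 1) * (2*x-1) ^ (2*m+1) := (abs_le.mp h2).1
  have h5 : η * (-(x * (1-x))) ≤ η * (x * (x - 1) * (2*x-1) ^ (2*m+1)) :=
    mul_le_mul_of_nonneg_left h4 hη.le
  nlinarith [mul_pos hη (mul_pos hx0 hx0)]

-- Bernstein construction
lemma exists_B (g : C(I, ℝ)) (η : ℝ) (hη : 0 ≤ η) (ε4 : ℝ) (hε4 : 0 < ε4)
    (hg0 : g ⟨0, by norm_num⟩ = 0) (hg1 : g ⟨1, by norm_num⟩ = 1)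
    (hglow : ∀ x : I, η * x ≤ g x) (hgup : ∀ x : I, g x ≤ 1 - η * (1 - x)) :
    ∃ B : ℝ[X], B.eval 0 = 0 ∧ B.eval 1 = 1 ∧
      ∀ x : I, (η * x ≤ B.eval ↑x ∧ B.eval ↑x ≤ 1 - η * (1 - ↑x)) ∧ |B.eval ↑x - g x| < ε4 := by
  -- choose n
  obtain ⟨N, hN⟩ := Metric.tendsto_atTop.mp (bernsteinApproximation_uniform g) ε4 hε4
  set n : ℕ := max N 1 with hn
  have hn1 : 1 ≤ n := le_max_right _ _
  have hnR : (0:ℝ) < (n:ℝ) := by exact_mod_cast hn1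
  have hBg : dist (bernsteinApproximation n g) g < ε4 := hN n (le_max_left _ _)
  set B : ℝ[X] := ∑ k : Fin (n+1), Polynomial.C (g (bernstein.z k)) * bernsteinPolynomial ℝ n k
    with hB
  have hBev : ∀ x : I, B.eval ↑x = bernsteinApproximation n g x := by
    intro x
    rw [hB, Polynomial.eval_finset_sum, bernsteinApproximation.apply]
    apply Finset.sum_congr rfl
    intro k _
    simp [bernstein]
    exact mul_comm _ _
  refine ⟨B, ?_, ?_, ?_⟩
  · rw [hB, Polynomial.eval_finset_sum]
    rw [Finset.sum_eq_single (0 : Fin (n+1))]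
    · simp [bernsteinPolynomial.eval_at_0]
      convert hg0 using 2
      simp [bernstein.z]
    · intro k _ hk
      have hkv : (k : ℕ) ≠ 0 := fun h => hk (Fin.ext (by simpa using h))
      simp [bernsteinPolynomial.eval_at_0, hkv]
    · simp
  · rw [hB, Polynomial.eval_finset_sum]
    rw [Finset.sum_eq_single (Fin.last n)]
    · simp [bernsteinPolynomial.eval_at_1]
      convert hg1 using 2
      simp [bernstein.z, Fin.last]
      field_simp
      rfl
    · intro k _ hk
      have : (k : ℕ) ≠ n := by
        intro h
        exact hk (Fin.ext (by simp [Fin.last, h]))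
      simp [bernsteinPolynomial.eval_at_1, this]
    · simp
  · intro x
    constructor
    · constructor
      · -- lower bound
        have hsum : ∑ k : Fin (n+1), ((k : ℝ)/n) * bernstein n k x = (x : ℝ) := by
          have h := bernsteinPolynomial.sum_smul ℝ n
          apply_fun fun p => Polynomial.eval (x : ℝ) p at h
          simp only [Polynomial.eval_finset_sum, nsmul_eq_mul, Polynomial.eval_mul,
            Polynomial.eval_natCast, Polynomial.eval_X] at h
          rw [Finset.sum_range fun k => (k:ℝ) * (bernsteinPolynomial ℝ n k).eval (x:ℝ)] at h
          have : ∀ k : Fin (n+1), ((k : ℝ)/n) * bernstein n k x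
              = ((k:ℝ) * (bernsteinPolynomial ℝ n k).eval (x:ℝ)) / n := by
            intro k; simp [bernstein]; ring
          rw [Finset.sum_congr rfl fun k _ => this k, ← Finset.sum_div, h]
          field_simp
        have hBx : B.eval ↑x = ∑ k : Fin (n+1), g (bernstein.z k) * bernstein n k x := by
          rw [hB, Polynomial.eval_finset_sum]
          exact Finset.sum_congr rfl fun k _ => by simp [bernstein]
        rw [hBx, ← hsum, Finset.mul_sum]
        apply Finset.sum_le_sum
        intro k _
        rw [← mul_assoc]
        apply mul_le_mul_of_nonneg_right _ bernstein_nonneg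
        have := hglow (bernstein.z k)
        simpa [bernstein.z] using this
      · -- upper bound
        have hsum1 : ∑ k : Fin (n+1), bernstein n k x = 1 := bernstein.probability n x
        have hsum : ∑ k : Fin (n+1), ((k : ℝ)/n) * bernstein n k x = (x : ℝ) := by
          have h := bernsteinPolynomial.sum_smul ℝ n
          apply_fun fun p => Polynomial.eval (x : ℝ) p at h
          simp only [Polynomial.eval_finset_sum, nsmul_eq_mul, Polynomial.eval_mul,
            Polynomial.eval_natCast, Polynomial.eval_X] at h
          rw [Finset.sum_range fun k => (k:ℝ) * (bernsteinPolynomial ℝ n k).eval (x:ℝ)] at h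
          have : ∀ k : Fin (n+1), ((k : ℝ)/n) * bernstein n k x
              = ((k:ℝ) * (bernsteinPolynomial ℝ n k).eval (x:ℝ)) / n := by
            intro k; simp [bernstein]; ring
          rw [Finset.sum_congr rfl fun k _ => this k, ← Finset.sum_div, h]
          field_simp
        have hBx : B.eval ↑x = ∑ k : Fin (n+1), g (bernstein.z k) * bernstein n k x := by
          rw [hB, Polynomial.eval_finset_sum]
          exact Finset.sum_congr rfl fun k _ => by simp [bernstein]
        have expand : 1 - η * (1 - ↑x) =
            ∑ k : Fin (n+1), (1 - η * (1 - (k:ℝ)/n)) * bernstein n k x := by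
          have : ∀ k : Fin (n+1), (1 - η * (1 - (k:ℝ)/n)) * bernstein n k x
              = bernstein n k x - η * (bernstein n k x - ((k:ℝ)/n) * bernstein n k x) := by
            intro k; ring
          rw [Finset.sum_congr rfl fun k _ => this k, Finset.sum_sub_distrib, ← Finset.mul_sum,
            Finset.sum_sub_distrib, hsum1, hsum]
        rw [hBx, expand]
        apply Finset.sum_le_sum
        intro k _
        apply mul_le_mul_of_nonneg_right _ bernstein_nonneg
        have := hgup (bernstein.z k)
        simpa [bernstein.z] using this
    · -- approximation
      have h := hBg
      rw [dist_eq_norm] at h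
      have h2 := (ContinuousMap.norm_lt_iff _ hε4).mp h x
      rw [ContinuousMap.sub_apply] at h2
      rw [hBev x]
      simpa using h2

lemma approx (f : C(Set.Icc (0:ℝ) 1, ℝ)) (hf : f ∈ F1) (ε : ℝ) (hε : 0 < ε) :
    ∃ p : Polynomial ℝ, memP' p ∧
      ‖p.toContinuousMapOn (Set.Icc (0:ℝ) 1) - f‖ < ε := by
  obtain ⟨hf0, hf1, hfm⟩ := hf
  set η : ℝ := min (ε/4) (1/2) with hηdef
  have hη0 : 0 < η := lt_min (by positivity) (by norm_num)
  have hηε : η ≤ ε/4 := min_le_left _ _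
  have hη1 : η ≤ 1/2 := min_le_right _ _
  set c : C(Set.Icc (0:ℝ) 1, ℝ) := ⟨Subtype.val, continuous_subtype_val⟩ with hc
  set g : C(Set.Icc (0:ℝ) 1, ℝ) := (1-η) • f + η • c with hg
  have hgapp : ∀ x : Set.Icc (0:ℝ) 1, g x = (1-η) * f x + η * ↑x := by
    intro x; simp [hg, hc]
  have hf0' : f ⟨0, by norm_num⟩ = 0 := hf0
  have hf1' : f ⟨1, by norm_num⟩ = 1 := hf1
  have hg0 : g ⟨0, by norm_num⟩ = 0 := by
    rw [hgapp, hf0']; show (1-η) * 0 + η * 0 = 0; ring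
  have hg1 : g ⟨1, by norm_num⟩ = 1 := by
    rw [hgapp, hf1']; show (1-η) * 1 + η * 1 = 1; ring
  have hglow : ∀ x : Set.Icc (0:ℝ) 1, η * ↑x ≤ g x := by
    intro x
    rw [hgapp]
    have h1 := (hfm x).1
    nlinarith [x.2.1, x.2.2]
  have hgup : ∀ x : Set.Icc (0:ℝ) 1, g x ≤ 1 - η * (1 - ↑x) := by
    intro x
    rw [hgapp]
    have h1 := (hfm x).2
    nlinarith [x.2.1, x.2.2]
  obtain ⟨B, hB0, hB1, hBprops⟩ := exists_B g η hη0.le (ε/4) (by positivity) hg0 hg1 hglow hgup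
  have hlow₁ : ∀ x ∈ Set.Ioo (0:ℝ) 1, η * x ≤ B.eval x := by
    intro x hx
    exact ((hBprops ⟨x, hx.1.le, hx.2.le⟩).1).1
  set r₂ : ℝ[X] := Polynomial.C 1 - B.comp (Polynomial.C 1 - Polynomial.X) with hr₂
  have hr₂ev : ∀ y : ℝ, r₂.eval y = 1 - B.eval (1 - y) := by
    intro y; simp [hr₂, Polynomial.eval_comp]
  have h0₂ : r₂.eval 0 = 0 := by rw [hr₂ev]; simp [hB1]
  have hlow₂ : ∀ y ∈ Set.Ioo (0:ℝ) 1, η * y ≤ r₂.eval y := by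
    intro y hy
    rw [hr₂ev]
    have h := ((hBprops ⟨1 - y, by constructor <;> [linarith [hy.2]; linarith [hy.1]]⟩).1).2
    simp only at h
    linarith
  obtain ⟨m₁, hm₁⟩ := tail_lemma B η hη0 hB0 hlow₁
  obtain ⟨m₂, hm₂⟩ := tail_lemma r₂ η hη0 h0₂ hlow₂
  set m : ℕ := max m₁ m₂ with hm
  have hodd : Odd (2 * m + 1) := ⟨m, by ring⟩
  set p : ℝ[X] := B + Polynomial.C η *
    (Polynomial.X * (Polynomial.X - Polynomial.C 1) *
      (2 * Polynomial.X - Polynomial.C 1) ^ (2 * m + 1)) with hp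
  have hpev : ∀ x : ℝ, p.eval x = B.eval x + η * (x * (x - 1) * (2 * x - 1) ^ (2 * m + 1)) := by
    intro x; simp [hp]
  have hE : ∀ x : ℝ, (1-x) * ((1-x) - 1) * (2*(1-x) - 1) ^ (2*m+1)
      = -(x * (x - 1) * (2*x - 1) ^ (2*m+1)) := by
    intro x
    rw [show (2*(1-x) - 1 : ℝ) = -(2*x - 1) by ring, hodd.neg_pow]
    ring
  have hmem : memP' p := by
    refine ⟨?_, ?_, ?_⟩
    · intro x hx
      constructor
      · rw [hpev]
        exact interior_lemma B η hη0 m hlow₁ x hx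
      · have h := interior_lemma r₂ η hη0 m hlow₂ (1-x) ⟨by linarith [hx.2], by linarith [hx.1]⟩
        rw [hr₂ev, hE x, show (1 - (1 - x) : ℝ) = x by ring] at h
        rw [hpev]
        linarith
    · intro x hx
      rw [hpev]
      exact hm₁ m (le_max_left _ _) x hx
    · intro x hx
      have h := hm₂ m (le_max_right _ _) (1-x) (by linarith)
      rw [hr₂ev, hE x, show (1 - (1 - x) : ℝ) = x by ring] at h
      rw [hpev]
      linarith
  refine ⟨p, hmem, ?_⟩
  rw [ContinuousMap.norm_lt_iff _ hε]
  intro x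
  rw [ContinuousMap.sub_apply]
  simp only [Polynomial.toContinuousMapOn_apply, Polynomial.toContinuousMap_apply]
  rw [Real.norm_eq_abs]
  have hBg := (hBprops x).2
  have hgf : |g x - f x| ≤ η := by
    rw [hgapp]
    have h1 := (hfm x).1
    have h2 := (hfm x).2
    rw [show ((1-η) * f x + η * ↑x - f x : ℝ) = η * (↑x - f x) by ring, abs_mul,
      abs_of_pos hη0]
    have : |(↑x - f x : ℝ)| ≤ 1 := by
      rw [abs_le]; constructor <;> nlinarith [x.2.1, x.2.2]
    nlinarith
  have hT : |η * ((x:ℝ) * (↑x - 1) * (2*↑x - 1) ^ (2*m+1))| ≤ η * (1/4) := by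
    rw [abs_mul, abs_of_pos hη0]
    apply mul_le_mul_of_nonneg_left _ hη0.le
    have hx0 := x.2.1
    have hx1 := x.2.2
    have h1 : |(2*(x:ℝ)-1) ^ (2*m+1)| ≤ 1 := by
      rw [abs_pow]
      apply pow_le_one₀ (abs_nonneg _)
      rw [abs_le]; constructor <;> linarith
    rw [abs_mul]
    have h2 : |(x:ℝ) * (↑x - 1)| ≤ 1/4 := by
      rw [abs_le]; constructor <;> nlinarith [sq_nonneg (2*(x:ℝ) - 1)]
    nlinarith [abs_nonneg ((x:ℝ) * (↑x - 1)), abs_nonneg ((2*(x:ℝ)-1) ^ (2*m+1))]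
  have hsplit : p.eval ↑x - f x = (B.eval ↑x - g x) + (g x - f x)
      + η * ((x:ℝ) * (↑x - 1) * (2*↑x - 1) ^ (2*m+1)) := by
    rw [hpev]; ring
  have habs : |p.eval ↑x - f x| ≤ |B.eval ↑x - g x| + |g x - f x|
      + |η * ((x:ℝ) * (↑x - 1) * (2*↑x - 1) ^ (2*m+1))| := by
    rw [hsplit]; exact abs_add_three _ _ _
  have hη4 : η * (1/4) ≤ ε/16 := by linarith
  linarith

lemma eval_zero_of_memP' {p : ℝ[X]} (hp : memP' p) : p.eval 0 = 0 := by
  obtain ⟨hio, hneg, _⟩ := hp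
  have ht1 : Filter.Tendsto (fun x => p.eval x) (nhdsWithin 0 (Set.Iio 0)) (nhds (p.eval 0)) :=
    (p.continuous_aeval.tendsto 0).mono_left nhdsWithin_le_nhds
  have ht2 : Filter.Tendsto (fun x => p.eval x) (nhdsWithin 0 (Set.Ioo (0:ℝ) 1)) (nhds (p.eval 0)) :=
    (p.continuous_aeval.tendsto 0).mono_left nhdsWithin_le_nhds
  have hne2 : (nhdsWithin (0:ℝ) (Set.Ioo (0:ℝ) 1)).NeBot := by
    rw [← mem_closure_iff_nhdsWithin_neBot, closure_Ioo (by norm_num : (0:ℝ) ≠ 1)]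
    exact ⟨le_refl 0, by norm_num⟩
  have hle : p.eval 0 ≤ 0 := by
    apply le_of_tendsto ht1
    filter_upwards [self_mem_nhdsWithin] with y hy
    exact (hneg y hy).le
  have hge : 0 ≤ p.eval 0 := by
    apply ge_of_tendsto ht2
    filter_upwards [self_mem_nhdsWithin] with y hy
    exact (hio y hy).1.le
  linarith

lemma eval_one_of_memP' {p : ℝ[X]} (hp : memP' p) : p.eval 1 = 1 := by
  obtain ⟨hio, _, hgt⟩ := hp
  have ht1 : Filter.Tendsto (fun x => p.eval x) (nhdsWithin 1 (Set.Ioi 1)) (nhds (p.eval 1)) :=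
    (p.continuous_aeval.tendsto 1).mono_left nhdsWithin_le_nhds
  have ht2 : Filter.Tendsto (fun x => p.eval x) (nhdsWithin 1 (Set.Ioo (0:ℝ) 1)) (nhds (p.eval 1)) :=
    (p.continuous_aeval.tendsto 1).mono_left nhdsWithin_le_nhds
  have hne2 : (nhdsWithin (1:ℝ) (Set.Ioo (0:ℝ) 1)).NeBot := by
    rw [← mem_closure_iff_nhdsWithin_neBot, closure_Ioo (by norm_num : (0:ℝ) ≠ 1)]
    exact ⟨by norm_num, le_refl 1⟩
  have hge : 1 ≤ p.eval 1 := by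
    apply ge_of_tendsto ht1
    filter_upwards [self_mem_nhdsWithin] with y hy
    exact (hgt y hy).le
  have hle : p.eval 1 ≤ 1 := by
    apply le_of_tendsto ht2
    filter_upwards [self_mem_nhdsWithin] with y hy
    exact (hio y hy).2.le
  linarith

lemma P'G_subset_F1 : P'G ⊆ F1 := by
  rintro _ ⟨p, hp, rfl⟩
  have h0 := eval_zero_of_memP' hp
  have h1 := eval_one_of_memP' hp
  refine ⟨by simpa using h0, by simpa using h1, ?_⟩
  intro x
  simp only [Polynomial.toContinuousMapOn_apply, Polynomial.toContinuousMap_apply]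
  obtain ⟨hx0, hx1⟩ := x.2
  rcases eq_or_lt_of_le hx0 with h | h
  · rw [show (x : ℝ) = 0 from h.symm, h0]; exact ⟨le_refl 0, by norm_num⟩
  · rcases eq_or_lt_of_le hx1 with h' | h'
    · rw [h', h1]; exact ⟨by norm_num, le_refl 1⟩
    · have := hp.1 ↑x ⟨h, h'⟩
      exact ⟨this.1.le, this.2.le⟩

lemma isClosed_F1 : IsClosed F1 := by
  have : F1 = ({f : C(Set.Icc (0:ℝ) 1, ℝ) | f ⟨0, by norm_num⟩ = 0}
      ∩ {f | f ⟨1, by norm_num⟩ = 1})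
      ∩ ⋂ x : Set.Icc (0:ℝ) 1, {f | f x ∈ Set.Icc (0:ℝ) 1} := by
    ext f
    simp only [F1, Set.mem_setOf_eq, Set.mem_inter_iff, Set.mem_iInter]
    tauto
  rw [this]
  refine IsClosed.inter (IsClosed.inter ?_ ?_) ?_
  · exact isClosed_eq (continuous_eval_const _) continuous_const
  · exact isClosed_eq (continuous_eval_const _) continuous_const
  · exact isClosed_iInter fun x =>
      IsClosed.preimage (continuous_eval_const x) isClosed_Icc


theorem stmt_4 :
    (∀ f ∈ F1, ∀ ε : ℝ, 0 < ε →
      ∃ p : Polynomial ℝ, memP' p ∧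
        ‖p.toContinuousMapOn (Set.Icc (0:ℝ) 1) - f‖ < ε) ∧
    closure P'G = F1 := by
  refine ⟨approx, ?_⟩
  apply subset_antisymm
  · exact closure_minimal P'G_subset_F1 isClosed_F1
  · intro f hf
    rw [Metric.mem_closure_iff]
    intro ε hε
    obtain ⟨p, hp, hnorm⟩ := approx f hf ε hε
    exact ⟨_, ⟨p, hp, rfl⟩, by rwa [dist_eq_norm, norm_sub_rev]⟩
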